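/- Let M ∈ DA be a finite monoid, h : Γ* → M a surjective homomorphism, and let (s,e), (r,f) be linked pairs. If s = se and efe = e, fef = f hold (which follow from M ∈ DA when f ∈ M_e), then [sr][fef]^ω and [srfe][efe]^ω intersect nontrivially: the set [sr][fef]^ω ∩ [srfe][efe]^ω is nonempty. -/
import Mathlib


namespace InfWords

variable {Γ : Type}

/-- Finite and infinite words over `Γ`: `Γ^∞ = Γ* ∪ Γ^ω`. -/
abbrev Word (Γ : Type) := List Γ ⊕ (ℕ → Γ)

/-- Prepend a finite word to a finite or infinite word. -/
def wappend (u : List Γ) : Word Γ → Word Γ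
  | Sum.inl v => Sum.inl (u ++ v)
  | Sum.inr f => Sum.inr fun n => if h : n < u.length then u.get ⟨n, h⟩ else f (n - u.length)

/-- The set of finite words `Γ*` inside `Γ^∞`. -/
def finWords (Γ : Type) : Set (Word Γ) := Set.range Sum.inl

/-- The set of infinite words `Γ^ω` inside `Γ^∞`. -/
def infWords (Γ : Type) : Set (Word Γ) := Set.range Sum.inr

/-- The alphabet of a word: the letters occurring in it. -/
def alph : Word Γ → Set Γ
  | Sum.inl u => {a | a ∈ u}
  | Sum.inr f => {a | ∃ n, f n = a}

/-- The imaginary part: letters occurring infinitely often. -/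
def im : Word Γ → Set Γ
  | Sum.inl _ => ∅
  | Sum.inr f => {a | ∀ n, ∃ m, n ≤ m ∧ f m = a}

/-- `A^∞`: words all of whose letters lie in `A`. -/
def infin (A : Set Γ) : Set (Word Γ) := {α | alph α ⊆ A}

/-- The basic set `u A^∞` of the alphabetic topology. -/
def cone (u : List Γ) (A : Set Γ) : Set (Word Γ) := wappend u '' infin A

/-- The alphabetic topology on `Γ^∞`, generated by the sets `u A^∞`. -/
instance alphTop : TopologicalSpace (Word Γ) :=
  TopologicalSpace.generateFrom {S | ∃ u A, S = cone u A}

/-- `cpx A`: words with `alph = im = A`. -/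
def cpx (A : Set Γ) : Set (Word Γ) := {β | alph β = A ∧ im β = A}

/-- The strict alphabetic topology, generated by the sets `u · cpx A`. -/
def strictTopo (Γ : Type) : TopologicalSpace (Word Γ) :=
  TopologicalSpace.generateFrom {S | ∃ u A, S = wappend u '' cpx A}

/-- `u` is a finite prefix of the word `α`. -/
def IsPre (u : List Γ) : Word Γ → Prop
  | Sum.inl v => u <+: v
  | Sum.inr f => ∀ i : Fin u.length, u.get i = f i.1

/-- The arrow language `→W`: every prefix extends to a prefix lying in `W`. -/
def arrow (W : Set (List Γ)) : Set (Word Γ) :=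
  {α | ∀ u, IsPre u α → ∃ v, IsPre (u ++ v) α ∧ u ++ v ∈ W}

/-- The right quotient `L / A^∞`. -/
def quotInf (L : Set (Word Γ)) (A : Set Γ) : Set (List Γ) :=
  {u | ∃ β ∈ infin A, wappend u β ∈ L}

/-- `A^im`: words whose set of letters occurring infinitely often is exactly `A`. -/
def imSet (A : Set Γ) : Set (Word Γ) := {α | im α = A}

/-- `z^ω`, with the convention `1^ω = 1`. -/
def omegaPow : List Γ → Word Γ
  | [] => Sum.inl []
  | a :: l => Sum.inr fun n => (a :: l).get ⟨n % (a :: l).length, Nat.mod_lt n (Nat.succ_pos _)⟩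

/-- The partial products `u v₀ v₁ ⋯ v_{n-1}`. -/
def partialProd (u : List Γ) (v : ℕ → List Γ) (n : ℕ) : List Γ :=
  u ++ ((List.range n).map v).flatten

/-- `α` is the (finite or infinite) product `u v₀ v₁ v₂ ⋯`, with convention `1^ω = 1`. -/
def IsInfProd (u : List Γ) (v : ℕ → List Γ) : Word Γ → Prop
  | Sum.inl w => (∀ n, partialProd u v n <+: w) ∧ ∃ n, partialProd u v n = w
  | Sum.inr f => (∀ n, IsPre (partialProd u v n) (Sum.inr f)) ∧
      ∀ k, ∃ n, k < (partialProd u v n).length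

/-- `h : Γ* → M` is a monoid homomorphism. -/
structure IsHom {M : Type} [Monoid M] (h : List Γ → M) : Prop where
  map_one : h [] = 1
  map_mul : ∀ u v, h (u ++ v) = h u * h v

/-- `[s][e]^ω`: products `u v₀ v₁ ⋯` with `h u = s` and `h vᵢ = e`. -/
def pairSet {M : Type} (h : List Γ → M) (s e : M) : Set (Word Γ) :=
  {α | ∃ u v, h u = s ∧ (∀ i, h (v i) = e) ∧ IsInfProd u v α}

/-- `(s, e)` is a linked pair. -/
def LinkedPair {M : Type} [Monoid M] (s e : M) : Prop := s * e = s ∧ e * e = e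

/-- `h` strongly recognizes `L`. -/
def StronglyRecognizes {M : Type} [Monoid M] (h : List Γ → M) (L : Set (Word Γ)) : Prop :=
  L = ⋃ (s : M) (e : M) (_ : LinkedPair s e ∧ (pairSet h s e ∩ L).Nonempty), pairSet h s e

/-- `L` is regular: strongly recognized by a surjective homomorphism onto a finite monoid. -/
def Regular (L : Set (Word Γ)) : Prop :=
  ∃ (M : Type) (i : Monoid M), Finite M ∧
    ∃ h : List Γ → M, @IsHom Γ M i h ∧ Function.Surjective h ∧ @StronglyRecognizes Γ M i h L

/-- `L` is deterministic. -/
def Deterministic (L : Set (Word Γ)) : Prop :=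
  Regular L ∧ ∃ W : Set (List Γ), L ∩ infWords Γ = arrow W ∩ infWords Γ

/-- The syntactic preorder `u ≤_L v`. -/
def synLe (L : Set (Word Γ)) (u v : List Γ) : Prop :=
  ∀ x y z : List Γ,
    (wappend (x ++ v ++ y) (omegaPow z) ∈ L → wappend (x ++ u ++ y) (omegaPow z) ∈ L) ∧
    (wappend x (omegaPow (v ++ y)) ∈ L → wappend x (omegaPow (u ++ y)) ∈ L)

/-- The syntactic congruence `u ≡_L v`. -/
def synEq (L : Set (Word Γ)) (u v : List Γ) : Prop := synLe L u v ∧ synLe L v u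

/-- `[s][e]^ω` for syntactic classes represented by words `s`, `e`. -/
def pairSetSyn (L : Set (Word Γ)) (s e : List Γ) : Set (Word Γ) :=
  {α | ∃ u v, synEq L u s ∧ (∀ i, synEq L (v i) e) ∧ IsInfProd u v α}

/-- `s` represents an element of `M_e` in the syntactic monoid of `L`:
`s` is a product of words each of which is a factor of (something equivalent to) `e`. -/
def InMe (L : Set (Word Γ)) (e s : List Γ) : Prop :=
  ∃ parts : List (List Γ), s = parts.flatten ∧ ∀ p ∈ parts, ∃ x y, synEq L (x ++ p ++ y) e

/-- Glue a factorization `u₁ a₁ u₂ a₂ ⋯ u_k a_k` into a single finite word. -/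
def glue : List (List Γ) → List (Set Γ × Γ) → List Γ
  | x :: xs, p :: l => x ++ p.2 :: glue xs l
  | _, _ => []

/-- `(us, β)` is a factorization of `α` as `u₁ a₁ ⋯ u_k a_k β` with `uᵢ ∈ Aᵢ*`, `β ∈ B^∞`. -/
def IsFactorization (l : List (Set Γ × Γ)) (B : Set Γ) (us : List (List Γ)) (β : Word Γ)
    (α : Word Γ) : Prop :=
  us.length = l.length ∧
  (∀ (i : ℕ) (h1 : i < us.length) (h2 : i < l.length),
    ∀ c ∈ us.get ⟨i, h1⟩, c ∈ (l.get ⟨i, h2⟩).1) ∧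
  β ∈ infin B ∧ α = wappend (glue us l) β

/-- The monomial `A₁* a₁ ⋯ A_k* a_k B^∞`. -/
def monomial (l : List (Set Γ × Γ)) (B : Set Γ) : Set (Word Γ) :=
  {α | ∃ us β, IsFactorization l B us β α}

/-- The monomial given by `(l, B)` is unambiguous. -/
def Unambiguous (l : List (Set Γ × Γ)) (B : Set Γ) : Prop :=
  ∀ α us β us' β', IsFactorization l B us β α → IsFactorization l B us' β' α →
    us = us' ∧ β = β'

/-- `L` is a polynomial: a finite union of monomials. -/
def IsPolynomial (L : Set (Word Γ)) : Prop :=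
  ∃ ms : List (List (Set Γ × Γ) × Set Γ), L = {α | ∃ m ∈ ms, α ∈ monomial m.1 m.2}

/-- The set of marker letters of a monomial. -/
def sndSet (l : List (Set Γ × Γ)) : Set Γ := {a | ∃ p ∈ l, p.2 = a}

/-- `M_e`: the submonoid generated by the factors of the idempotent `e`. -/
def Msub {M : Type} [Monoid M] (e : M) : Submonoid M :=
  Submonoid.closure {t | ∃ x y, x * t * y = e}

/-- The variety `DA`: `ese = e` for all idempotents `e` and all `s ∈ M_e`. -/
def IsDA (M : Type) [Monoid M] : Prop :=
  ∀ e : M, e * e = e → ∀ s ∈ Msub e, e * s * e = e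

end InfWords

section Aux

open InfWords

private lemma partialProd_succ {Γ : Type} (u : List Γ) (v : ℕ → List Γ) (n : ℕ) :
    partialProd u v (n + 1) = partialProd u v n ++ v n := by
  simp [partialProd, List.range_succ]

private lemma partialProd_prefix_succ {Γ : Type} (u : List Γ) (v : ℕ → List Γ) (n : ℕ) :
    partialProd u v n <+: partialProd u v (n + 1) := by
  rw [partialProd_succ]; exact List.prefix_append _ _

private lemma partialProd_prefix {Γ : Type} (u : List Γ) (v : ℕ → List Γ) {a b : ℕ}
    (hab : a ≤ b) : partialProd u v a <+: partialProd u v b := by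
  induction b with
  | zero => simpa [Nat.le_zero.mp hab] using List.prefix_refl _
  | succ b ih =>
    rcases Nat.lt_or_ge a (b + 1) with hlt | hge
    · exact (ih (Nat.lt_succ_iff.mp hlt)).trans (partialProd_prefix_succ u v b)
    · have : a = b + 1 := le_antisymm hab hge
      subst this; exact List.prefix_refl _

private lemma le_length_partialProd {Γ : Type} (u : List Γ) (C : List Γ)
    (hC : 1 ≤ C.length) : ∀ n, n ≤ (partialProd u (fun _ => C) n).length
  | 0 => Nat.zero_le _
  | n + 1 => by
    rw [partialProd_succ, List.length_append]
    have := le_length_partialProd u C hC n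
    omega

private lemma partialProd_nil {Γ : Type} (u : List Γ) :
    ∀ n, partialProd u (fun _ => ([] : List Γ)) n = u
  | 0 => by simp [partialProd]
  | n + 1 => by rw [partialProd_succ, partialProd_nil u n, List.append_nil]

private lemma isPre_mono {Γ : Type} {w w' : List Γ} {α : Word Γ} (hp : w <+: w') :
    IsPre w' α → IsPre w α := by
  cases α with
  | inl v => exact fun hpre => hp.trans hpre
  | inr g =>
    intro hpre i
    have h2 := hpre ⟨i.1, Nat.lt_of_lt_of_le i.2 hp.length_le⟩
    simp only [List.get_eq_getElem] at h2 ⊢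
    rw [hp.getElem i.2]
    exact h2

private lemma isPre_limit {Γ : Type} (u : List Γ) (C : List Γ) (hC : C ≠ []) :
    ∃ g : ℕ → Γ, ∀ m, IsPre (partialProd u (fun _ => C) m) (Sum.inr g) := by
  have hC1 : 1 ≤ C.length := List.length_pos_iff.mpr hC
  have hlen := le_length_partialProd u C hC1
  refine ⟨fun n => (partialProd u (fun _ => C) (n + 1)).get
      ⟨n, Nat.lt_of_lt_of_le (Nat.lt_succ_self n) (hlen (n + 1))⟩, ?_⟩
  intro m i
  show _ = _
  simp only [List.get_eq_getElem]
  have h1 : partialProd u (fun _ => C) m <+: partialProd u (fun _ => C) (max m (i.1 + 1)) :=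
    partialProd_prefix u _ (le_max_left _ _)
  have h2 : partialProd u (fun _ => C) (i.1 + 1) <+: partialProd u (fun _ => C) (max m (i.1 + 1)) :=
    partialProd_prefix u _ (le_max_right _ _)
  rw [h1.getElem i.2, h2.getElem (Nat.lt_of_lt_of_le (Nat.lt_succ_self i.1) (hlen (i.1 + 1)))]

private lemma pp2_eq {Γ : Type} (p y z : List Γ) : ∀ n,
    partialProd (p ++ y ++ z) (fun _ => z ++ y ++ y ++ z) n
      = partialProd p (fun _ => y ++ z ++ z ++ y) n ++ y ++ z
  | 0 => by simp [partialProd]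
  | n + 1 => by
    rw [partialProd_succ, partialProd_succ, pp2_eq p y z n]
    simp [List.append_assoc]

end Aux
theorem da_pairSets_intersect (Γ : Type) [Fintype Γ] (M : Type)
    [Monoid M] [Finite M] (hDA : InfWords.IsDA M)
    (h : List Γ → M) (hhom : InfWords.IsHom h) (hsurj : Function.Surjective h)
    (s e r f : M) (hse : InfWords.LinkedPair s e) (hrf : InfWords.LinkedPair r f)
    (hs : s = s * e) (hefe : e * f * e = e) (hfef : f * e * f = f) :
    (InfWords.pairSet h (s * r) (f * e * f) ∩
      InfWords.pairSet h (s * r * f * e) (e * f * e)).Nonempty := by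
  obtain ⟨p, hp⟩ := hsurj (s * r)
  obtain ⟨y, hy⟩ := hsurj f
  obtain ⟨z, hz⟩ := hsurj e
  have hee : e * e = e := hse.2
  have hff : f * f = f := hrf.2
  have hhC : h (y ++ z ++ z ++ y) = f * e * f := by
    rw [hhom.map_mul, hhom.map_mul, hhom.map_mul, hy, hz]
    rw [mul_assoc (f * e) e f, ← mul_assoc, mul_assoc f e e, hee]
  have hhD : h (z ++ y ++ y ++ z) = e * f * e := by
    rw [hhom.map_mul, hhom.map_mul, hhom.map_mul, hy, hz]
    rw [mul_assoc (e * f) f e, ← mul_assoc, mul_assoc e f f, hff]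
  have hu2 : h (p ++ y ++ z) = s * r * f * e := by
    rw [hhom.map_mul, hhom.map_mul, hp, hy, hz]
  by_cases hCnil : (y ++ z ++ z ++ y : List Γ) = []
  · -- degenerate case: y = z = []
    have hynil : y = [] := by
      have := hCnil
      simp only [List.append_eq_nil_iff] at this
      exact this.1.1.1
    have hznil : z = [] := by
      have := hCnil
      simp only [List.append_eq_nil_iff] at this
      exact this.1.1.2
    refine ⟨Sum.inl p, ⟨p, fun _ => y ++ z ++ z ++ y, hp, fun _ => hhC, ?_, ?_⟩,
      ⟨p ++ y ++ z, fun _ => z ++ y ++ y ++ z, hu2, fun _ => hhD, ?_, ?_⟩⟩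
    · intro n
      rw [hCnil, partialProd_nil]
    · exact ⟨0, by rw [hCnil, partialProd_nil]⟩
    · intro n
      have hDnil : (z ++ y ++ y ++ z : List Γ) = [] := by simp [hynil, hznil]
      rw [hDnil, partialProd_nil]
      simp [hynil, hznil]
    · have hDnil : (z ++ y ++ y ++ z : List Γ) = [] := by simp [hynil, hznil]
      exact ⟨0, by rw [hDnil, partialProd_nil]; simp [hynil, hznil]⟩
  · -- main case: build the infinite word
    have hC1 : 1 ≤ (y ++ z ++ z ++ y).length := List.length_pos_iff.mpr hCnil
    have hlen := le_length_partialProd p _ hC1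
    obtain ⟨g, hg⟩ := isPre_limit p (y ++ z ++ z ++ y) hCnil
    refine ⟨Sum.inr g, ⟨p, fun _ => y ++ z ++ z ++ y, hp, fun _ => hhC, hg, ?_⟩,
      ⟨p ++ y ++ z, fun _ => z ++ y ++ y ++ z, hu2, fun _ => hhD, ?_, ?_⟩⟩
    · intro k
      exact ⟨k + 1, Nat.lt_of_lt_of_le (Nat.lt_succ_self k) (hlen (k + 1))⟩
    · intro n
      have hpre : InfWords.partialProd (p ++ y ++ z) (fun _ => z ++ y ++ y ++ z) n
          <+: InfWords.partialProd p (fun _ => y ++ z ++ z ++ y) (n + 1) := by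
        rw [pp2_eq, partialProd_succ]
        exact ⟨z ++ y, by simp [List.append_assoc]⟩
      exact isPre_mono hpre (hg (n + 1))
    · intro k
      refine ⟨k + 1, ?_⟩
      rw [pp2_eq]
      have := hlen (k + 1)
      simp only [List.length_append]
      omega
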